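/- For every k ≥ 1, the ordered product ∏→_{(i,j)} R_{ij}(j−i), taken over all pairs (i, j) with 1 ≤ i < j ≤ k arranged in lexicographic order from left to right, equals k! · A_k as operators on (ℂⁿ)^{⊗k}, where A_k is the normalized antisymmetrizer. -/

import Mathlib

noncomputable section
open scoped Kronecker
open Matrix

/-- Square matrices acting on the tensor power `(ℂⁿ)^{⊗ι}`, modelled on the
function basis `ι → Fin n`. -/
abbrev TMat (ι : Type) (n : ℕ) := Matrix (ι → Fin n) (ι → Fin n) ℂ

/-- The matrix units `E_{ij}` of `End(ℂⁿ)`. -/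
def matE (n : ℕ) (i j : Fin n) : Matrix (Fin n) (Fin n) ℂ := Matrix.single i j 1

/-- The flip `P = Σ E_{ij} ⊗ E_{ji}` on `ℂⁿ ⊗ ℂⁿ`. -/
def flipP (n : ℕ) : Matrix (Fin n × Fin n) (Fin n × Fin n) ℂ :=
  ∑ i : Fin n, ∑ j : Fin n, matE n i j ⊗ₖ matE n j i

/-- `P̄ = Σ E_{ij} ⊗ E_{ij}` on `ℂⁿ ⊗ ℂⁿ`. -/
def PbarM (n : ℕ) : Matrix (Fin n × Fin n) (Fin n × Fin n) ℂ :=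
  ∑ i : Fin n, ∑ j : Fin n, matE n i j ⊗ₖ matE n i j

/-- The conjugate `X̃ = G⁻¹ Xᵀ G` of `X` relative to the bilinear form with
Gram matrix `G`, i.e. `⟨X u, v⟩ = ⟨u, X̃ v⟩` where `⟨u, v⟩ = uᵀ G v`. -/
def conjF {n : ℕ} (G X : Matrix (Fin n) (Fin n) ℂ) : Matrix (Fin n) (Fin n) ℂ :=
  G⁻¹ * Xᵀ * G

/-- `P̃ = Σ Ẽ_{ij} ⊗ E_{ji}`. -/
def PtilM (n : ℕ) (G : Matrix (Fin n) (Fin n) ℂ) : Matrix (Fin n × Fin n) (Fin n × Fin n) ℂ :=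
  ∑ i : Fin n, ∑ j : Fin n, conjF G (matE n i j) ⊗ₖ matE n j i

/-- `P̂ = Σ Ẽ_{ij} ⊗ E_{ij}`. -/
def PhatM (n : ℕ) (G : Matrix (Fin n) (Fin n) ℂ) : Matrix (Fin n × Fin n) (Fin n × Fin n) ℂ :=
  ∑ i : Fin n, ∑ j : Fin n, conjF G (matE n i j) ⊗ₖ matE n i j

/-- The Yang R-matrix `R(x) = 1 − P x⁻¹`. -/
def Rm (n : ℕ) (x : ℂ) : Matrix (Fin n × Fin n) (Fin n × Fin n) ℂ := 1 - x⁻¹ • flipP n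

/-- `R̄(x) = 1 − P̄ x⁻¹`. -/
def RbarM (n : ℕ) (x : ℂ) : Matrix (Fin n × Fin n) (Fin n × Fin n) ℂ := 1 - x⁻¹ • PbarM n

/-- `R̃(x) = 1 − P̃ x⁻¹`. -/
def RtilM (n : ℕ) (G : Matrix (Fin n) (Fin n) ℂ) (x : ℂ) :
    Matrix (Fin n × Fin n) (Fin n × Fin n) ℂ := 1 - x⁻¹ • PtilM n G

/-- `R̂(x) = 1 − P̂ x⁻¹`. -/
def RhatM (n : ℕ) (G : Matrix (Fin n) (Fin n) ℂ) (x : ℂ) :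
    Matrix (Fin n × Fin n) (Fin n × Fin n) ℂ := 1 - x⁻¹ • PhatM n G

/-- `Z_{ij}` : the operator on a tensor power of `ℂⁿ` acting as the two-factor
operator `Z` in the `i`-th and `j`-th tensor factors and as the identity elsewhere. -/
def lift2 {n : ℕ} {ι : Type} [Fintype ι] [DecidableEq ι] (i j : ι)
    (Z : Matrix (Fin n × Fin n) (Fin n × Fin n) ℂ) : TMat ι n :=
  fun f g => Z (f i, f j) (g i, g j) *
    ∏ p : ι, if p = i ∨ p = j then 1 else (if f p = g p then 1 else 0)

/-- The operator `P_σ` permuting the tensor factors of `(ℂⁿ)^{⊗k}` according to `σ`. -/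
def permMat (n k : ℕ) (σ : Equiv.Perm (Fin k)) : TMat (Fin k) n :=
  fun f g => if f ∘ σ = g then 1 else 0

/-- The normalized antisymmetrizer `A_k = (1/k!) Σ_σ sgn(σ) P_σ` on `(ℂⁿ)^{⊗k}`. -/
def antisym (n k : ℕ) : TMat (Fin k) n :=
  (k.factorial : ℂ)⁻¹ • ∑ σ : Equiv.Perm (Fin k), (((Equiv.Perm.sign σ : ℤ) : ℂ)) • permMat n k σ

/-- The list of all pairs `(a, b)` with `a < b` in `Fin m`, in lexicographic order. -/
def pairsLex (m : ℕ) : List (Fin m × Fin m) :=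
  (List.finRange m).flatMap (fun a =>
    ((List.finRange m).filter (fun b => decide (a < b))).map (fun b => (a, b)))

lemma permMat_mul (n k : ℕ) (σ τ : Equiv.Perm (Fin k)) :
    permMat n k σ * permMat n k τ = permMat n k (σ * τ) := by
  ext f g
  rw [Matrix.mul_apply, Finset.sum_eq_single (f ∘ σ)]
  · simp [permMat, Function.comp_assoc]
    congr
  · intro h _ hh
    simp [permMat, Ne.symm hh]
  · simp

lemma permMat_one (n k : ℕ) : permMat n k 1 = 1 := by
  ext f g
  simp [permMat, Matrix.one_apply, eq_comm]


lemma flipP_apply (n : ℕ) (a b c d : Fin n) :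
    flipP n (a, b) (c, d) = if a = d ∧ b = c then 1 else 0 := by
  simp [flipP, matE, Matrix.single, Matrix.sum_apply, ite_and]
  aesop


lemma ibooleMul (P Q : Prop) [Decidable P] [Decidable Q] :
    (if P then (1:ℂ) else 0) * (if Q then 1 else 0) = if P ∧ Q then 1 else 0 := by
  by_cases hP : P <;> by_cases hQ : Q <;> simp [hP, hQ]

lemma prod_cond {n k : ℕ} (i j : Fin k) (f g : Fin k → Fin n) :
    (∏ p : Fin k, if p = i ∨ p = j then (1:ℂ) else (if f p = g p then 1 else 0))
      = if (∀ p, p = i ∨ p = j ∨ f p = g p) then 1 else 0 := by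
  have : ∀ p : Fin k, (if p = i ∨ p = j then (1:ℂ) else (if f p = g p then 1 else 0))
      = if p = i ∨ p = j ∨ f p = g p then 1 else 0 := by
    intro p
    by_cases h1 : p = i <;> by_cases h2 : p = j <;> by_cases h3 : f p = g p <;>
      simp [h1, h2, h3]
  rw [Finset.prod_congr rfl (fun p _ => this p), Finset.prod_boole]
  simp

lemma lift2_sub {n k : ℕ} (i j : Fin k) (X Y : Matrix (Fin n × Fin n) (Fin n × Fin n) ℂ) :
    lift2 i j (X - Y) = lift2 i j X - lift2 i j Y := by
  ext f g; simp [lift2, sub_mul]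

lemma lift2_smul {n k : ℕ} (i j : Fin k) (c : ℂ) (X : Matrix (Fin n × Fin n) (Fin n × Fin n) ℂ) :
    lift2 i j (c • X) = c • lift2 i j X := by
  ext f g; simp [lift2, mul_assoc]

lemma lift2_one {n k : ℕ} (i j : Fin k) (h : i ≠ j) :
    lift2 i j (1 : Matrix (Fin n × Fin n) (Fin n × Fin n) ℂ) = 1 := by
  ext f g
  simp only [lift2, Matrix.one_apply, prod_cond, ibooleMul]
  refine if_congr ?_ rfl rfl
  constructor
  · rintro ⟨h1, hall⟩
    rw [Prod.ext_iff] at h1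
    funext p
    rcases hall p with rfl | rfl | hp
    · exact h1.1
    · exact h1.2
    · exact hp
  · rintro rfl; exact ⟨rfl, fun p => Or.inr (Or.inr rfl)⟩

lemma lift2_flip {n k : ℕ} (i j : Fin k) (h : i ≠ j) :
    lift2 i j (flipP n) = permMat n k (Equiv.swap i j) := by
  ext f g
  simp only [lift2, flipP_apply, permMat, prod_cond, ibooleMul]
  refine if_congr ?_ rfl rfl
  rw [funext_iff]
  constructor
  · rintro ⟨⟨h1, h2⟩, hall⟩ p
    by_cases h1' : p = i
    · subst h1'; simpa [Equiv.swap_apply_left] using h2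
    by_cases h2' : p = j
    · subst h2'; simpa [Equiv.swap_apply_right] using h1
    · rcases hall p with hp | hp | hp
      · exact absurd hp h1'
      · exact absurd hp h2'
      · simpa [Equiv.swap_apply_of_ne_of_ne h1' h2'] using hp
  · intro hall
    refine ⟨⟨?_, ?_⟩, fun p => ?_⟩
    · simpa [Equiv.swap_apply_right] using hall j
    · simpa [Equiv.swap_apply_left] using hall i
    · by_cases h1' : p = i
      · exact Or.inl h1'
      by_cases h2' : p = j
      · exact Or.inr (Or.inl h2')
      · exact Or.inr (Or.inr (by simpa [Equiv.swap_apply_of_ne_of_ne h1' h2'] using hall p))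

lemma lift2_R {n k : ℕ} (i j : Fin k) (h : i ≠ j) (x : ℂ) :
    lift2 i j (Rm n x) = 1 - x⁻¹ • permMat n k (Equiv.swap i j) := by
  rw [Rm, lift2_sub, lift2_smul, lift2_one i j h, lift2_flip i j h]

def fkn {k : ℕ} (hk : 0 < k) (j : ℕ) : Fin k := ⟨j % k, Nat.mod_lt _ hk⟩

lemma fkn_val {k : ℕ} (hk : 0 < k) {j : ℕ} (h : j < k) : ((fkn hk j : Fin k) : ℕ) = j :=
  Nat.mod_eq_of_lt h

def fixSet (k b : ℕ) : Finset (Equiv.Perm (Fin k)) :=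
  Finset.univ.filter (fun σ => ∀ x : Fin k, (x : ℕ) < b → σ x = x)

lemma mem_fixSet {k b : ℕ} {σ : Equiv.Perm (Fin k)} :
    σ ∈ fixSet k b ↔ ∀ x : Fin k, (x : ℕ) < b → σ x = x := by
  simp [fixSet]

def sgn {k : ℕ} (σ : Equiv.Perm (Fin k)) : ℂ := ((Equiv.Perm.sign σ : ℤ) : ℂ)

lemma sgn_mul {k : ℕ} (σ τ : Equiv.Perm (Fin k)) : sgn (σ * τ) = sgn σ * sgn τ := by
  simp [sgn]

lemma sgn_sq {k : ℕ} (σ : Equiv.Perm (Fin k)) : sgn σ * sgn σ = 1 := by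
  rcases Int.units_eq_one_or (Equiv.Perm.sign σ) with h | h <;> simp [sgn, h]

def AmM (n k b : ℕ) : TMat (Fin k) n := ∑ σ ∈ fixSet k b, sgn σ • permMat n k σ

lemma absorb {n k : ℕ} (b : ℕ) (τ : Equiv.Perm (Fin k)) (hτ : τ ∈ fixSet k b) :
    permMat n k τ * AmM n k b = sgn τ • AmM n k b := by
  rw [AmM, Finset.mul_sum, Finset.smul_sum]
  refine Finset.sum_nbij' (fun σ => τ * σ) (fun σ => τ⁻¹ * σ) ?_ ?_ ?_ ?_ ?_
  · intro σ hσ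
    rw [mem_fixSet] at *
    intro x hx
    simp [hσ x hx, hτ x hx, Equiv.Perm.mul_apply]
  · intro σ hσ
    rw [mem_fixSet] at *
    intro x hx
    have : τ⁻¹ x = x := by
      have := hτ x hx; nth_rewrite 1 [← this]; simp
    simp [hσ x hx, this, Equiv.Perm.mul_apply]
  · intro σ _; simp [← mul_assoc]
  · intro σ _; simp [← mul_assoc]
  · intro σ hσ
    rw [Matrix.mul_smul, permMat_mul]
    show sgn σ • permMat n k (τ * σ) = sgn τ • sgn (τ * σ) • permMat n k (τ * σ)
    rw [smul_smul]
    congr 1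
    rw [sgn_mul, ← mul_assoc, sgn_sq, one_mul]

lemma swapFix {k : ℕ} (b : ℕ) (r s : Fin k) (hr : b ≤ (r : ℕ)) (hs : b ≤ (s : ℕ)) :
    Equiv.swap r s ∈ fixSet k b := by
  rw [mem_fixSet]
  intro x hx
  apply Equiv.swap_apply_of_ne_of_ne
  · exact fun h => absurd (h ▸ hx) (by omega)
  · exact fun h => absurd (h ▸ hx) (by omega)

lemma AmM_top (n k : ℕ) : AmM n k k = 1 := by
  have : fixSet k k = {1} := by
    ext σ
    rw [mem_fixSet, Finset.mem_singleton]
    constructor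
    · intro h; ext x; exact congrArg Fin.val (h x x.isLt)
    · rintro rfl; intro x _; rfl
  rw [AmM, this, Finset.sum_singleton, permMat_one]
  simp [sgn]

lemma AmM_zero (n k : ℕ) :
    AmM n k 0 = ∑ σ : Equiv.Perm (Fin k), sgn σ • permMat n k σ := by
  rw [AmM]
  congr 1
  ext σ; simp [fixSet]

lemma fkn_eq {k : ℕ} (hk : 0 < k) (x : Fin k) : fkn hk (x : ℕ) = x := by
  apply Fin.ext; exact fkn_val hk x.isLt

lemma coset' {n k : ℕ} (hk : 0 < k) (a : ℕ) (ha : a < k) :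
    AmM n k a = ∑ p ∈ Finset.Ico a k ×ˢ fixSet k (a + 1),
      sgn (Equiv.swap (fkn hk a) (fkn hk p.1) * p.2) •
        permMat n k (Equiv.swap (fkn hk a) (fkn hk p.1) * p.2) := by
  rw [AmM]
  refine Finset.sum_nbij'
    (fun σ => (((σ (fkn hk a)) : ℕ), Equiv.swap (fkn hk a) (σ (fkn hk a)) * σ))
    (fun p => Equiv.swap (fkn hk a) (fkn hk p.1) * p.2) ?_ ?_ ?_ ?_ ?_
  · intro σ hσ
    rw [mem_fixSet] at hσ
    have hge : a ≤ ((σ (fkn hk a)) : ℕ) := by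
      by_contra h
      push_neg at h
      have h2 : σ (σ (fkn hk a)) = σ (fkn hk a) := hσ _ h
      have h3 : σ (fkn hk a) = fkn hk a := σ.injective h2
      rw [h3, fkn_val hk ha] at h
      omega
    rw [Finset.mem_product]
    constructor
    · rw [Finset.mem_Ico]; exact ⟨hge, (σ (fkn hk a)).isLt⟩
    · rw [mem_fixSet]
      intro x hx
      rcases Nat.lt_or_ge (x : ℕ) a with h | h
      · rw [Equiv.Perm.mul_apply, hσ x h]
        apply Equiv.swap_apply_of_ne_of_ne
        · exact fun hc => by rw [hc, fkn_val hk ha] at h; omega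
        · exact fun hc => by rw [hc] at h; omega
      · have hxa : x = fkn hk a := by apply Fin.ext; rw [fkn_val hk ha]; omega
        rw [hxa, Equiv.Perm.mul_apply, Equiv.swap_apply_right]
  · intro p hp
    rw [Finset.mem_product, Finset.mem_Ico, mem_fixSet] at hp
    rw [mem_fixSet]
    intro x hx
    rw [Equiv.Perm.mul_apply, hp.2 x (by omega)]
    apply Equiv.swap_apply_of_ne_of_ne
    · exact fun hc => by rw [hc, fkn_val hk ha] at hx; omega
    · exact fun hc => by rw [hc, fkn_val hk (by omega : p.1 < k)] at hx; omega
  · intro σ hσ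
    simp only []
    rw [fkn_eq hk, ← mul_assoc, Equiv.swap_mul_self, one_mul]
  · intro p hp
    rw [Finset.mem_product, Finset.mem_Ico, mem_fixSet] at hp
    have h1 : (Equiv.swap (fkn hk a) (fkn hk p.1) * p.2) (fkn hk a) = fkn hk p.1 := by
      rw [Equiv.Perm.mul_apply, hp.2 _ (by rw [fkn_val hk ha]; omega), Equiv.swap_apply_left]
    ext
    · simp only [h1]
      exact fkn_val hk (by omega : p.1 < k)
    · simp only [h1, fkn_eq hk]
      rw [← mul_assoc, Equiv.swap_mul_self, one_mul]
  · intro σ hσ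
    simp only []
    rw [fkn_eq hk, ← mul_assoc, Equiv.swap_mul_self, one_mul]

lemma coset {n k : ℕ} (hk : 0 < k) (a : ℕ) (ha : a < k) :
    AmM n k a = AmM n k (a + 1) - ∑ r ∈ Finset.Ico (a + 1) k,
      permMat n k (Equiv.swap (fkn hk a) (fkn hk r)) * AmM n k (a + 1) := by
  rw [coset' hk a ha, Finset.sum_product]
  have inner : ∀ r : ℕ, ∑ τ ∈ fixSet k (a + 1),
      sgn (Equiv.swap (fkn hk a) (fkn hk r) * τ) •
        permMat n k (Equiv.swap (fkn hk a) (fkn hk r) * τ)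
      = sgn (Equiv.swap (fkn hk a) (fkn hk r)) •
          (permMat n k (Equiv.swap (fkn hk a) (fkn hk r)) * AmM n k (a + 1)) := by
    intro r
    rw [AmM, Finset.mul_sum, Finset.smul_sum]
    refine Finset.sum_congr rfl (fun τ _ => ?_)
    rw [Matrix.mul_smul, permMat_mul, smul_smul, ← sgn_mul]
  rw [Finset.sum_congr rfl (fun r _ => inner r)]
  rw [← Finset.insert_Ico_add_one_left_eq_Ico ha, Finset.sum_insert (by simp)]
  have h1 : Equiv.swap (fkn hk a) (fkn hk a) = 1 := Equiv.swap_self _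
  rw [h1, permMat_one, one_mul]
  have h2 : sgn (1 : Equiv.Perm (Fin k)) = 1 := by simp [sgn]
  rw [h2, one_smul, sub_eq_add_neg, ← Finset.sum_neg_distrib]
  congr 1
  refine Finset.sum_congr rfl (fun r hr => ?_)
  rw [Finset.mem_Ico] at hr
  have hne : fkn hk a ≠ fkn hk r := by
    intro hc
    have := congrArg Fin.val hc
    rw [fkn_val hk ha, fkn_val hk hr.2] at this
    omega
  have : sgn (Equiv.swap (fkn hk a) (fkn hk r)) = -1 := by
    rw [sgn, Equiv.Perm.sign_swap hne]; simp
  rw [this]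
  simp

lemma swap_swap_id {α : Type*} [DecidableEq α] {a b c : α} (hab : a ≠ b) (hac : a ≠ c)
    (hbc : b ≠ c) : Equiv.swap a b * Equiv.swap a c = Equiv.swap a c * Equiv.swap c b := by
  ext x
  simp only [Equiv.Perm.mul_apply, Equiv.swap_apply_def]
  split_ifs <;> simp_all

lemma cast_ne {a b : ℕ} (h : a < b) : ((b : ℂ) - (a : ℂ)) ≠ 0 := by
  rw [sub_ne_zero]
  exact fun hc => absurd (Nat.cast_inj.mp hc) (by omega)

lemma rowL {n k : ℕ} (hk : 0 < k) (a : ℕ) (ha : a < k) :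
    ∀ (l b : ℕ), a < b → b + l ≤ k →
    ((List.range' b l).map (fun (j : ℕ) => (1 : TMat (Fin k) n) -
        (((j : ℂ) - (a : ℂ))⁻¹) • permMat n k (Equiv.swap (fkn hk a) (fkn hk j)))).prod *
      AmM n k (a + 1)
    = AmM n k (a + 1) - (((b : ℂ) - (a : ℂ))⁻¹) •
        ∑ r ∈ Finset.Ico b (b + l),
          permMat n k (Equiv.swap (fkn hk a) (fkn hk r)) * AmM n k (a + 1) := by
  intro l
  induction l with
  | zero => intro b _ _; simp
  | succ l IH =>
    intro b hab hbl
    rw [List.range'_succ, List.map_cons, List.prod_cons, mul_assoc,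
      IH (b + 1) (by omega) (by omega)]
    set Am' := AmM n k (a + 1) with hAm'
    set P := permMat n k (Equiv.swap (fkn hk a) (fkn hk b)) with hP
    set S := ∑ r ∈ Finset.Ico (b + 1) (b + 1 + l),
      permMat n k (Equiv.swap (fkn hk a) (fkn hk r)) * Am' with hS
    set s : ℂ := ((b : ℂ) - (a : ℂ))⁻¹ with hs
    set t : ℂ := ((((b + 1 : ℕ)) : ℂ) - (a : ℂ))⁻¹ with ht
    have hbk : b < k := by omega
    have hPS : P * S = -S := by
      rw [hS, Finset.mul_sum, ← Finset.sum_neg_distrib]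
      refine Finset.sum_congr rfl fun r hr => ?_
      rw [Finset.mem_Ico] at hr
      have hrk : r < k := by omega
      have h1 : fkn hk a ≠ fkn hk b := fun hc => by
        have := congrArg Fin.val hc; rw [fkn_val hk ha, fkn_val hk hbk] at this; omega
      have h2 : fkn hk a ≠ fkn hk r := fun hc => by
        have := congrArg Fin.val hc; rw [fkn_val hk ha, fkn_val hk hrk] at this; omega
      have h3 : fkn hk b ≠ fkn hk r := fun hc => by
        have := congrArg Fin.val hc; rw [fkn_val hk hbk, fkn_val hk hrk] at this; omega
      rw [hP, ← mul_assoc, permMat_mul, swap_swap_id h1 h2 h3, ← permMat_mul, mul_assoc,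
        absorb (a + 1) _ (swapFix (a + 1) _ _ (by rw [fkn_val hk hrk]; omega)
          (by rw [fkn_val hk hbk]; omega))]
      have h4 : sgn (Equiv.swap (fkn hk r) (fkn hk b)) = -1 := by
        rw [sgn, Equiv.Perm.sign_swap (Ne.symm h3)]; simp
      rw [h4]
      simp
      rfl
    have key : t + s * t = s := by
      have hBA : (((b + 1 : ℕ)) : ℂ) - a = ((b : ℂ) - a) + 1 := by push_cast; ring
      have h1 : ((b : ℂ) - a) ≠ 0 := cast_ne hab
      have h2 : ((b : ℂ) - a) + 1 ≠ 0 := by rw [← hBA]; exact cast_ne (by omega)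
      rw [ht, hs, hBA]
      field_simp
    have hsplit : ∑ r ∈ Finset.Ico b (b + (l + 1)),
        permMat n k (Equiv.swap (fkn hk a) (fkn hk r)) * Am' = P * Am' + S := by
      have he : b + (l + 1) = b + 1 + l := by omega
      rw [he, ← Finset.insert_Ico_add_one_left_eq_Ico (by omega : b < b + 1 + l),
        Finset.sum_insert (by simp)]
    have hsS : s • S = t • S + (s * t) • S := by
      calc s • S = (t + s * t) • S := by rw [key]
      _ = t • S + (s * t) • S := add_smul _ _ _
    rw [hsplit, smul_add, sub_mul, one_mul, Matrix.smul_mul, mul_sub, Matrix.mul_smul,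
      hPS, smul_neg, sub_neg_eq_add, smul_add, smul_smul, hsS]
    abel

lemma rowFull {n k : ℕ} (hk : 0 < k) (a : ℕ) (ha : a < k) :
    ((List.range' (a + 1) (k - (a + 1))).map (fun (j : ℕ) => (1 : TMat (Fin k) n) -
        (((j : ℂ) - (a : ℂ))⁻¹) • permMat n k (Equiv.swap (fkn hk a) (fkn hk j)))).prod *
      AmM n k (a + 1) = AmM n k a := by
  rw [rowL hk a ha (k - (a + 1)) (a + 1) (by omega) (by omega)]
  have h1 : ((((a + 1 : ℕ)) : ℂ) - (a : ℂ))⁻¹ = 1 := by push_cast; simp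
  have h2 : a + 1 + (k - (a + 1)) = k := by omega
  rw [h1, h2, one_smul, coset hk a ha]

lemma filter_range (k c : ℕ) :
    (List.range k).filter (fun v => decide (c ≤ v)) = List.range' c (k - c) := by
  induction k with
  | zero => simp
  | succ k IH =>
    rw [List.range_succ, List.filter_append]
    by_cases h : c ≤ k
    · have h3 : k + 1 - c = (k - c) + 1 := by omega
      rw [h3, List.range'_concat, IH]
      congr 1
      simp only [List.filter_cons, List.filter_nil]
      rw [if_pos (by simpa using h)]
      congr 2
      omega
    · have h3 : k + 1 - c = k - c := by omega
      rw [h3, IH]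
      simp only [List.filter_cons, List.filter_nil]
      rw [if_neg (by simpa using h)]
      simp

lemma filter_finRange {k : ℕ} (hk : 0 < k) (a : Fin k) :
    (List.finRange k).filter (fun x => decide (a < x))
      = (List.range' ((a : ℕ) + 1) (k - ((a : ℕ) + 1))).map (fkn hk) := by
  apply List.map_injective_iff.2 Fin.val_injective
  have e1 : (List.finRange k).filter (fun x => decide (a < x))
      = (List.finRange k).filter ((fun v => decide ((a : ℕ) + 1 ≤ v)) ∘ Fin.val) := by
    refine List.filter_congr (fun x _ => ?_)
    exact decide_eq_decide.2 (by rw [Fin.lt_def]; omega)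
  rw [e1, ← List.filter_map, (show (List.finRange k).map Fin.val = List.range k from List.ext_getElem (by simp) (by simp)), filter_range, List.map_map]
  have e2 : ∀ j ∈ List.range' ((a : ℕ) + 1) (k - ((a : ℕ) + 1)), (Fin.val ∘ fkn hk) j = id j := by
    intro j hj
    rw [List.mem_range'_1] at hj
    exact fkn_val hk (by omega)
  rw [List.map_congr_left e2, List.map_id]

lemma outerL {n k : ℕ} (hk : 0 < k) : ∀ (d b : ℕ), b + d = k →
    ((((List.finRange k).drop b).flatMap (fun a =>
        ((List.finRange k).filter (fun x => decide (a < x))).map (fun x => (a, x)))).map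
      (fun ij => lift2 ij.1 ij.2 (Rm n (((ij.2 : ℕ) : ℂ) - ((ij.1 : ℕ) : ℂ))))).prod
    = AmM n k b := by
  intro d
  induction d with
  | zero =>
    intro b hb
    have : b = k := by omega
    subst this
    rw [List.drop_of_length_le (by simp)]
    simp [AmM_top]
  | succ d IH =>
    intro b hb
    have hbk : b < k := by omega
    rw [List.drop_eq_getElem_cons (by simpa using hbk), List.flatMap_cons, List.map_append,
      List.prod_append, IH (b + 1) (by omega)]
    have hget : (List.finRange k)[b]'(by simpa using hbk) = fkn hk b := by
      apply Fin.ext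
      rw [List.getElem_finRange]
      exact (fkn_val hk hbk).symm
    rw [hget]
    have hval : ((fkn hk b : Fin k) : ℕ) = b := fkn_val hk hbk
    rw [filter_finRange hk (fkn hk b), hval, List.map_map, List.map_map]
    have e3 : ∀ j ∈ List.range' (b + 1) (k - (b + 1)),
        ((fun ij : Fin k × Fin k => lift2 ij.1 ij.2
            (Rm n (((ij.2 : ℕ) : ℂ) - ((ij.1 : ℕ) : ℂ)))) ∘ (fun x => (fkn hk b, x)) ∘ fkn hk) j
        = (fun (j : ℕ) => (1 : TMat (Fin k) n) -
            (((j : ℂ) - (b : ℂ))⁻¹) • permMat n k (Equiv.swap (fkn hk b) (fkn hk j))) j := by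
      intro j hj
      rw [List.mem_range'_1] at hj
      have hjk : j < k := by omega
      have hne : fkn hk b ≠ fkn hk j := fun hc => by
        have := congrArg Fin.val hc
        rw [fkn_val hk hbk, fkn_val hk hjk] at this
        omega
      simp only [Function.comp_apply]
      rw [lift2_R _ _ hne, hval, fkn_val hk hjk]
    rw [Function.comp_assoc, List.map_congr_left e3, rowFull hk b hbk]

/-- The fusion formula `∏→_{(i,j), i<j, lex} R_{ij}(j−i) = k! A_k` on `(ℂⁿ)^{⊗k}`. -/
theorem stmt8 (n k : ℕ) (hn : 1 ≤ n) (hk : 1 ≤ k) :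
    ((pairsLex k).map (fun ij =>
      lift2 ij.1 ij.2 (Rm n (((ij.2 : ℕ) : ℂ) - ((ij.1 : ℕ) : ℂ))))).prod
  = (k.factorial : ℂ) • antisym n k := by
  have hk0 : 0 < k := hk
  have h := outerL (n := n) hk0 k 0 (by omega)
  rw [List.drop_zero] at h
  rw [pairsLex, h, AmM_zero, antisym, smul_smul,
    mul_inv_cancel₀ (by exact_mod_cast Nat.factorial_ne_zero k), one_smul]
  rfl
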